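/- For |q| < 1 and nonnegative integer n, H_n(aD_q){1/((bx;q)_∞ (cx;q)_∞)} = ((q^n ac;q)_∞ / ((bx;q)_∞ (cx;q)_∞ (ac;q)_∞)) · Σ_{m=0}^∞ ((q^n;q)_m (cx;q)_m / ((q;q)_m (q^n ac;q)_m)) (ab)^m. -/

import Mathlib

open Finset Filter

/-- finite q-Pochhammer symbol `(a;q)_n` -/
noncomputable def qPoch (q a : ℂ) (n : ℕ) : ℂ := ∏ j ∈ Finset.range n, (1 - a * q ^ j)

/-- infinite q-Pochhammer symbol `(a;q)_∞` -/
noncomputable def qPochInf (q a : ℂ) : ℂ := ∏' j : ℕ, (1 - a * q ^ j)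

/-- Gaussian binomial coefficient `[n choose k]_q` -/
noncomputable def qbinom (q : ℂ) (n k : ℕ) : ℂ :=
  qPoch q q n / (qPoch q q k * qPoch q q (n - k))

/-- the q-differential operator `D_q` -/
noncomputable def Dq (q : ℂ) (f : ℂ → ℂ) : ℂ → ℂ := fun x => (f x - f (q * x)) / x

/-- homogeneous Hahn polynomial `Φ_m^{(α)}(b,x|q)` -/
noncomputable def hahn (q α b x : ℂ) (m : ℕ) : ℂ :=
  ∑ k ∈ Finset.range (m + 1), qbinom q m k * qPoch q α k * b ^ k * x ^ (m - k)

open Topology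

lemma qPoch_zero (q a : ℂ) : qPoch q a 0 = 1 := by simp [qPoch]

lemma qPoch_succ (q a : ℂ) (n : ℕ) : qPoch q a (n+1) = qPoch q a n * (1 - a * q ^ n) :=
  Finset.prod_range_succ _ _

lemma qPoch_succ' (q a : ℂ) (n : ℕ) : qPoch q a (n+1) = (1 - a) * qPoch q (a*q) n := by
  rw [qPoch, Finset.prod_range_succ']
  simp only [pow_zero, mul_one]
  rw [mul_comm, qPoch]
  congr 1
  exact Finset.prod_congr rfl fun j _ => by ring

lemma qPoch_add (q a : ℂ) (m n : ℕ) :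
    qPoch q a (m+n) = qPoch q a m * qPoch q (a*q^m) n := by
  rw [qPoch, Finset.prod_range_add, qPoch, qPoch]
  congr 1
  exact Finset.prod_congr rfl fun j _ => by rw [pow_add]; ring

lemma one_sub_mul_pow_ne {q z : ℂ} (hq : ‖q‖ < 1) (hz : ‖z‖ < 1) (j : ℕ) :
    1 - z * q ^ j ≠ 0 := by
  intro h
  have h1 : z * q ^ j = 1 := by linear_combination -h
  have : ‖z * q ^ j‖ < 1 := by
    rw [norm_mul, norm_pow]
    calc ‖z‖ * ‖q‖ ^ j ≤ ‖z‖ * 1 := by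
          gcongr
          exact pow_le_one₀ (norm_nonneg _) hq.le
      _ < 1 := by simpa using hz
  rw [h1] at this; simp at this

lemma qPoch_ne_zero {q z : ℂ} (hq : ‖q‖ < 1) (hz : ‖z‖ < 1) (k : ℕ) :
    qPoch q z k ≠ 0 :=
  Finset.prod_ne_zero_iff.2 fun j _ => one_sub_mul_pow_ne hq hz j

lemma qPoch_q_ne_zero {q : ℂ} (hq : ‖q‖ < 1) (k : ℕ) : qPoch q q k ≠ 0 :=
  qPoch_ne_zero hq hq k

lemma log_summable {q : ℂ} (hq : ‖q‖ < 1) (z : ℂ) :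
    Summable fun n : ℕ => Complex.log (1 - z * q ^ n) := by
  apply Summable.of_norm_bounded_eventually_nat (g := fun n => 3/2 * (‖z‖ * ‖q‖ ^ n))
  · exact ((summable_geometric_of_lt_one (norm_nonneg q) hq).mul_left _).mul_left _
  · have h0 : Tendsto (fun n : ℕ => ‖z‖ * ‖q‖ ^ n) atTop (𝓝 (‖z‖ * 0)) :=
      (tendsto_pow_atTop_nhds_zero_of_lt_one (norm_nonneg q) hq).const_mul _
    rw [mul_zero] at h0
    filter_upwards [h0.eventually (eventually_le_nhds (by norm_num : (0:ℝ) < 1/2))] with n hn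
    have hb : ‖-(z * q ^ n)‖ ≤ 1/2 := by
      rw [norm_neg, norm_mul, norm_pow]; exact hn
    have := Complex.norm_log_one_add_half_le_self hb
    rw [show (1 : ℂ) + -(z * q ^ n) = 1 - z * q ^ n by ring] at this
    calc ‖Complex.log (1 - z * q ^ n)‖ ≤ 3/2 * ‖-(z * q ^ n)‖ := this
      _ = 3/2 * (‖z‖ * ‖q‖ ^ n) := by rw [norm_neg, norm_mul, norm_pow]

lemma qPochInf_eq_cexp {q z : ℂ} (hq : ‖q‖ < 1) (hz : ‖z‖ < 1) :
    qPochInf q z = Complex.exp (∑' n : ℕ, Complex.log (1 - z * q ^ n)) := by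
  have := Complex.cexp_tsum_eq_tprod (f := fun n => 1 - z * q ^ n)
    (fun n => one_sub_mul_pow_ne hq hz n) (log_summable hq z)
  exact this.symm

lemma qPochInf_ne_zero {q z : ℂ} (hq : ‖q‖ < 1) (hz : ‖z‖ < 1) : qPochInf q z ≠ 0 := by
  rw [qPochInf_eq_cexp hq hz]; exact Complex.exp_ne_zero _

lemma qPochInf_multipliable {q z : ℂ} (hq : ‖q‖ < 1) (hz : ‖z‖ < 1) :
    Multipliable fun n : ℕ => 1 - z * q ^ n :=
  Complex.multipliable_of_summable_log (log_summable hq z)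

lemma norm_mul_lt_one {q z : ℂ} (hq : ‖q‖ < 1) (hz : ‖z‖ < 1) : ‖z * q‖ < 1 := by
  rw [norm_mul]
  nlinarith [norm_nonneg z, norm_nonneg q]

lemma qPochInf_peel {q z : ℂ} (hq : ‖q‖ < 1) (hz : ‖z‖ < 1) :
    qPochInf q z = (1 - z) * qPochInf q (z * q) := by
  have hm : Multipliable fun n : ℕ => 1 - z * q ^ (n + 1) :=
    (qPochInf_multipliable hq (norm_mul_lt_one hq hz)).congr fun n => by ring
  have h := tprod_eq_zero_mul' (f := fun n : ℕ => 1 - z * q ^ n) hm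
  rw [qPochInf, h]
  rw [pow_zero, mul_one, qPochInf]
  congr 1
  exact tprod_congr fun n => by ring

lemma norm_mul_pow_lt {q z : ℂ} (hq : ‖q‖ < 1) (hz : ‖z‖ < 1) (n : ℕ) :
    ‖z * q ^ n‖ < 1 := by
  rw [norm_mul, norm_pow]
  calc ‖z‖ * ‖q‖ ^ n ≤ ‖z‖ * 1 := by gcongr; exact pow_le_one₀ (norm_nonneg _) hq.le
    _ < 1 := by simpa using hz

lemma qPochInf_split {q z : ℂ} (hq : ‖q‖ < 1) (hz : ‖z‖ < 1) (n : ℕ) :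
    qPochInf q z = qPoch q z n * qPochInf q (z * q ^ n) := by
  induction n with
  | zero => simp [qPoch_zero]
  | succ n ih =>
      rw [ih, qPochInf_peel hq (norm_mul_pow_lt hq hz n), qPoch_succ]
      rw [show z * q ^ n * q = z * q ^ (n+1) by ring]
      ring
lemma qPoch_norm_le {q : ℂ} (hq : ‖q‖ < 1) {z : ℂ} (hz : ‖z‖ ≤ 1) (m : ℕ) :
    ‖qPoch q z m‖ ≤ Real.exp ((1 - ‖q‖)⁻¹) := by
  rw [qPoch]
  calc ‖∏ j ∈ Finset.range m, (1 - z * q ^ j)‖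
      = ∏ j ∈ Finset.range m, ‖1 - z * q ^ j‖ := norm_prod _ _
    _ ≤ ∏ j ∈ Finset.range m, Real.exp (‖q‖ ^ j) := by
        apply Finset.prod_le_prod (fun j _ => norm_nonneg _) (fun j _ => ?_)
        calc ‖1 - z * q ^ j‖ ≤ ‖(1:ℂ)‖ + ‖z * q ^ j‖ := norm_sub_le _ _
          _ ≤ 1 + ‖q‖ ^ j := by
              rw [norm_one, norm_mul, norm_pow]
              have : ‖z‖ * ‖q‖ ^ j ≤ 1 * ‖q‖ ^ j := by gcongr
              linarith [this]
          _ ≤ Real.exp (‖q‖ ^ j) := by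
              have := Real.add_one_le_exp (‖q‖ ^ j); linarith
    _ = Real.exp (∑ j ∈ Finset.range m, ‖q‖ ^ j) := (Real.exp_sum _ _).symm
    _ ≤ Real.exp ((1 - ‖q‖)⁻¹) := by
        apply Real.exp_le_exp.2
        have := Summable.sum_le_tsum (Finset.range m) (fun i _ => by positivity)
          (summable_geometric_of_lt_one (norm_nonneg q) hq)
        rwa [tsum_geometric_of_lt_one (norm_nonneg q) hq] at this

lemma qPoch_q_lower {q : ℂ} (hq : ‖q‖ < 1) :
    ∃ δ : ℝ, 0 < δ ∧ ∀ m, δ ≤ ‖qPoch q q m‖ := by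
  have hL : qPochInf q q ≠ 0 := qPochInf_ne_zero hq hq
  have hLpos : 0 < ‖qPochInf q q‖ := norm_pos_iff.2 hL
  have ht : Tendsto (fun m : ℕ => qPoch q q m) atTop (𝓝 (qPochInf q q)) :=
    (qPochInf_multipliable hq hq).hasProd.tendsto_prod_nat
  have ht' : Tendsto (fun m : ℕ => ‖qPoch q q m‖) atTop (𝓝 ‖qPochInf q q‖) := ht.norm
  have h2 : ∀ᶠ m in atTop, ‖qPochInf q q‖ / 2 < ‖qPoch q q m‖ :=
    ht'.eventually_const_lt (half_lt_self hLpos)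
  obtain ⟨N, hN⟩ := eventually_atTop.mp h2
  have hne : (Finset.range (N + 1)).Nonempty := ⟨0, by simp⟩
  refine ⟨min (‖qPochInf q q‖ / 2)
      ((Finset.range (N + 1)).inf' hne fun m => ‖qPoch q q m‖), lt_min (by linarith) ?_, fun m => ?_⟩
  · rw [Finset.lt_inf'_iff]
    exact fun m _ => norm_pos_iff.2 (qPoch_q_ne_zero hq m)
  · rcases le_or_gt m N with h | h
    · exact le_trans (min_le_right _ _)
        (Finset.inf'_le _ (by simp only [Finset.mem_range]; omega))
    · exact le_trans (min_le_left _ _) (hN m h.le).le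
lemma qbinom_pascal {q : ℂ} (hq : ‖q‖ < 1) {j k : ℕ} (h : j < k) :
    qbinom q (k+1) (j+1) = q ^ (j+1) * qbinom q k (j+1) + qbinom q k j := by
  obtain ⟨m, rfl⟩ : ∃ m, k = j + 1 + m := ⟨k - (j+1), by omega⟩
  have e1 : j + 1 + m + 1 - (j + 1) = m + 1 := by omega
  have e2 : j + 1 + m - (j + 1) = m := by omega
  have e3 : j + 1 + m - j = m + 1 := by omega
  rw [qbinom, qbinom, qbinom, e1, e2, e3]
  rw [qPoch_succ q q (j+1+m), qPoch_succ q q m, qPoch_succ q q j]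
  have h1 : qPoch q q j ≠ 0 := qPoch_q_ne_zero hq j
  have h2 : qPoch q q m ≠ 0 := qPoch_q_ne_zero hq m
  have h3 : (1 - q * q ^ j) ≠ 0 := one_sub_mul_pow_ne hq hq j
  have h4 : (1 - q * q ^ m) ≠ 0 := one_sub_mul_pow_ne hq hq m
  field_simp
  ring

lemma qbinom_self (q : ℂ) {k : ℕ} (hk : qPoch q q k ≠ 0) : qbinom q k k = 1 := by
  rw [qbinom, Nat.sub_self, qPoch_zero, mul_one, div_self hk]

lemma qbinom_zero (q : ℂ) {k : ℕ} (hk : qPoch q q k ≠ 0) : qbinom q k 0 = 1 := by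
  rw [qbinom, Nat.sub_zero, qPoch_zero, one_mul, div_self hk]

lemma hahn_rec {q : ℂ} (hq : ‖q‖ < 1) (b c : ℂ) (k : ℕ) (x : ℂ) :
    hahn q (c*x) b c k - (1-b*x)*(1-c*x) * hahn q (c*(q*x)) b c k
      = x * hahn q (c*x) b c (k+1) := by
  have hpe : ∀ j : ℕ, (1 - c*x) * qPoch q (c*(q*x)) j = qPoch q (c*x) (j+1) := by
    intro j
    rw [qPoch_succ' q (c*x) j, show c*x*q = c*(q*x) by ring]
  -- LHS as a single sum
  have lhs_eq : hahn q (c*x) b c k - (1-b*x)*(1-c*x) * hahn q (c*(q*x)) b c k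
      = ∑ j ∈ Finset.range (k+1), x * (qbinom q k j * (c * q^j * qPoch q (c*x) j
          + b * qPoch q (c*x) (j+1)) * b ^ j * c ^ (k-j)) := by
    rw [hahn, hahn, Finset.mul_sum, ← Finset.sum_sub_distrib]
    apply Finset.sum_congr rfl
    intro j hj
    have h1 : (1-b*x)*(1-c*x) * (qbinom q k j * qPoch q (c*(q*x)) j * b ^ j * c ^ (k-j))
        = (1-b*x) * (qbinom q k j * qPoch q (c*x) (j+1) * b ^ j * c ^ (k-j)) := by
      rw [← hpe j]; ring
    rw [h1, qPoch_succ q (c*x) j]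
    ring
  rw [lhs_eq, ← Finset.mul_sum]
  congr 1
  -- now the finite identity
  have expand : ∀ j ∈ Finset.range (k+1),
      qbinom q k j * (c * q^j * qPoch q (c*x) j + b * qPoch q (c*x) (j+1)) * b ^ j * c ^ (k-j)
      = qbinom q k j * q^j * qPoch q (c*x) j * b ^ j * c ^ ((k-j)+1)
        + qbinom q k j * qPoch q (c*x) (j+1) * b ^ (j+1) * c ^ (k-j) := by
    intro j _; ring
  rw [Finset.sum_congr rfl expand, Finset.sum_add_distrib, hahn]
  rw [Finset.sum_range_succ' (fun i => qbinom q (k+1) i * qPoch q (c*x) i * b ^ i * c ^ (k+1-i))]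
  rw [Finset.sum_range_succ' (fun j => qbinom q k j * q^j * qPoch q (c*x) j * b ^ j * c ^ ((k-j)+1))]
  rw [Finset.sum_range_succ (fun j => qbinom q k j * qPoch q (c*x) (j+1) * b ^ (j+1) * c ^ (k-j))]
  have hk1 : qPoch q q (k+1) ≠ 0 := qPoch_q_ne_zero hq (k+1)
  have hk0 : qPoch q q k ≠ 0 := qPoch_q_ne_zero hq k
  have term0 : qbinom q k 0 * q^0 * qPoch q (c*x) 0 * b ^ 0 * c ^ ((k-0)+1)
      = qbinom q (k+1) 0 * qPoch q (c*x) 0 * b ^ 0 * c ^ (k+1-0) := by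
    rw [qbinom_zero q hk0, qbinom_zero q hk1]
    norm_num
  have termtop : qbinom q k k * qPoch q (c*x) (k+1) * b ^ (k+1) * c ^ (k-k)
      = qbinom q (k+1) (k+1) * qPoch q (c*x) (k+1) * b ^ (k+1) * c ^ (k+1-(k+1)) := by
    rw [qbinom_self q hk0, qbinom_self q hk1, Nat.sub_self, Nat.sub_self]
  have middle : ∀ j ∈ Finset.range k,
      qbinom q k (j+1) * q^(j+1) * qPoch q (c*x) (j+1) * b ^ (j+1) * c ^ ((k-(j+1))+1)
        + qbinom q k j * qPoch q (c*x) (j+1) * b ^ (j+1) * c ^ (k-j)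
      = qbinom q (k+1) (j+1) * qPoch q (c*x) (j+1) * b ^ (j+1) * c ^ (k+1-(j+1)) := by
    intro j hj
    have hjk : j < k := Finset.mem_range.mp hj
    have e1 : (k-(j+1))+1 = k - j := by omega
    have e2 : k+1-(j+1) = k - j := by omega
    rw [e1, e2, qbinom_pascal hq hjk]
    ring
  rw [term0, termtop, Finset.sum_range_succ
    (fun j => qbinom q (k+1) (j+1) * qPoch q (c*x) (j+1) * b ^ (j+1) * c ^ (k+1-(j+1)))]
  rw [← Finset.sum_congr rfl middle, Finset.sum_add_distrib]
  ring
lemma Dq_iterate {q b c : ℂ} (hq0 : q ≠ 0) (hq : ‖q‖ < 1) (k : ℕ) :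
    ∀ x : ℂ, x ≠ 0 → ‖b * x‖ < 1 → ‖c * x‖ < 1 →
    (Dq q)^[k] (fun t => 1 / (qPochInf q (b * t) * qPochInf q (c * t))) x
      = hahn q (c*x) b c k / (qPochInf q (b * x) * qPochInf q (c * x)) := by
  induction k with
  | zero =>
      intro x _ _ _
      simp only [Function.iterate_zero, id_eq]
      have : hahn q (c*x) b c 0 = 1 := by
        simp [hahn, qbinom, qPoch_zero]
      rw [this]
  | succ k ih =>
      intro x hx hbx hcx
      have hqx : q * x ≠ 0 := mul_ne_zero hq0 hx
      have hbqx : ‖b * (q * x)‖ < 1 := by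
        rw [show b * (q * x) = b * x * q by ring]
        exact norm_mul_lt_one hq hbx
      have hcqx : ‖c * (q * x)‖ < 1 := by
        rw [show c * (q * x) = c * x * q by ring]
        exact norm_mul_lt_one hq hcx
      rw [Function.iterate_succ_apply', Dq, ih x hx hbx hcx, ih (q*x) hqx hbqx hcqx]
      -- peel the infinite products at q*x
      have hb' : qPochInf q (b * x) = (1 - b*x) * qPochInf q (b * (q * x)) := by
        rw [qPochInf_peel hq hbx, show b * x * q = b * (q * x) by ring]
      have hc' : qPochInf q (c * x) = (1 - c*x) * qPochInf q (c * (q * x)) := by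
        rw [qPochInf_peel hq hcx, show c * x * q = c * (q * x) by ring]
      set B' := qPochInf q (b * (q * x))
      set C' := qPochInf q (c * (q * x))
      have hbne : (1 : ℂ) - b*x ≠ 0 := by
        have := one_sub_mul_pow_ne hq hbx 0
        simpa using this
      have hcne : (1 : ℂ) - c*x ≠ 0 := by
        have := one_sub_mul_pow_ne hq hcx 0
        simpa using this
      rw [hb', hc']
      have key : hahn q (c*(q*x)) b c k / (B' * C')
          = ((1-b*x)*(1-c*x) * hahn q (c*(q*x)) b c k) / ((1 - b*x) * B' * ((1 - c*x) * C')) := by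
        rw [show (1 - b*x) * B' * ((1 - c*x) * C') = ((1-b*x)*(1-c*x)) * (B' * C') by ring]
        rw [mul_div_mul_left _ _ (mul_ne_zero hbne hcne)]
      rw [key, div_sub_div_same]
      rw [show hahn q (c*x) b c k - (1-b*x)*(1-c*x) * hahn q (c*(q*x)) b c k
            = x * hahn q (c*x) b c (k+1) from hahn_rec hq b c k x]
      rw [div_div]
      rw [show (1 - b*x) * B' * ((1 - c*x) * C') * x = x * ((1 - b*x) * B' * ((1 - c*x) * C')) by ring]
      exact mul_div_mul_left _ _ hx
lemma finC {q : ℂ} (hq : ‖q‖ < 1) (N k : ℕ) :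
    ∑ j ∈ Finset.range (k+1), qPoch q (q^N) j / qPoch q q j * (q^N) ^ (k-j)
      = qPoch q (q^(N+1)) k / qPoch q q k := by
  induction k with
  | zero => simp [qPoch_zero]
  | succ k ih =>
      rw [Finset.sum_range_succ]
      have step : ∀ j ∈ Finset.range (k+1),
          qPoch q (q^N) j / qPoch q q j * (q^N) ^ (k+1-j)
            = (qPoch q (q^N) j / qPoch q q j * (q^N) ^ (k-j)) * q^N := by
        intro j hj
        have hjk : j ≤ k := by have := Finset.mem_range.mp hj; omega
        rw [show k+1-j = (k-j)+1 by omega, pow_succ]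
        ring
      rw [Finset.sum_congr rfl step, ← Finset.sum_mul, ih]
      have hk : qPoch q q k ≠ 0 := qPoch_q_ne_zero hq k
      have hk1 : (1 - q * q^k) ≠ 0 := one_sub_mul_pow_ne hq hq k
      rw [Nat.sub_self, pow_zero, mul_one]
      rw [qPoch_succ q q k, qPoch_succ q (q^(N+1)) k,
        qPoch_succ' q (q^N) k, show (q:ℂ)^N * q = q^(N+1) by rw [pow_succ]]
      field_simp
      ring
lemma sumB_norm_summable {q : ℂ} (hq : ‖q‖ < 1) {α z : ℂ} (hα : ‖α‖ ≤ 1) (hz : ‖z‖ < 1) :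
    Summable fun m : ℕ => ‖qPoch q α m / qPoch q q m * z ^ m‖ := by
  obtain ⟨δ, hδ, hδle⟩ := qPoch_q_lower hq
  refine Summable.of_nonneg_of_le (fun m => norm_nonneg _) (fun m => ?_)
    ((summable_geometric_of_lt_one (norm_nonneg z) hz).mul_left (Real.exp ((1 - ‖q‖)⁻¹) / δ))
  rw [norm_mul, norm_div, norm_pow]
  exact mul_le_mul_of_nonneg_right
    (div_le_div₀ (Real.exp_nonneg _) (qPoch_norm_le hq hα m) hδ (hδle m))
    (pow_nonneg (norm_nonneg z) m)

lemma sumB {q : ℂ} (hq : ‖q‖ < 1) {z : ℂ} (hz : ‖z‖ < 1) (N : ℕ) :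
    ∑' m : ℕ, qPoch q (q^N) m / qPoch q q m * z ^ m = 1 / qPoch q z N := by
  induction N with
  | zero =>
      rw [qPoch_zero]
      rw [tsum_eq_single 0 ?_]
      · simp [qPoch_zero]
      · intro m hm
        obtain ⟨m', rfl⟩ : ∃ m', m = m' + 1 := ⟨m - 1, by omega⟩
        have : qPoch q ((q:ℂ)^0) (m'+1) = 0 := by
          rw [qPoch_succ' q _ m']
          simp
        rw [this]
        simp
  | succ N ih =>
      have hzqN : ‖z * q^N‖ < 1 := norm_mul_pow_lt hq hz N
      have hα : ‖(q:ℂ)^N‖ ≤ 1 := by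
        rw [norm_pow]; exact pow_le_one₀ (norm_nonneg q) hq.le
      have hf : Summable fun m : ℕ => ‖qPoch q (q^N) m / qPoch q q m * z ^ m‖ :=
        sumB_norm_summable hq hα hz
      have hg : Summable fun i : ℕ => ‖(z * q^N) ^ i‖ := by
        simpa using summable_geometric_of_lt_one (norm_nonneg (z*q^N)) hzqN
      have cauchy := tsum_mul_tsum_eq_tsum_sum_antidiagonal_of_summable_norm hf hg
      rw [ih] at cauchy
      rw [tsum_geometric_of_norm_lt_one hzqN] at cauchy
      have hNz : qPoch q z (N+1) = qPoch q z N * (1 - z * q^N) := qPoch_succ q z N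
      rw [hNz]
      have : 1 / (qPoch q z N * (1 - z * q^N)) = 1 / qPoch q z N * (1 - z*q^N)⁻¹ := by
        rw [div_mul_eq_div_div, div_eq_mul_inv]
      rw [this, cauchy]
      apply tsum_congr
      intro k
      rw [Finset.Nat.sum_antidiagonal_eq_sum_range_succ_mk]
      have step : ∀ j ∈ Finset.range (k+1),
          qPoch q (q^N) j / qPoch q q j * z ^ j * (z * q^N) ^ (k-j)
            = (qPoch q (q^N) j / qPoch q q j * (q^N) ^ (k-j)) * z ^ k := by
        intro j hj
        have hjk : j ≤ k := by have := Finset.mem_range.mp hj; omega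
        have hzz : z ^ j * z ^ (k-j) = z ^ k := by rw [← pow_add, Nat.add_sub_cancel' hjk]
        rw [mul_pow, show qPoch q (q^N) j / qPoch q q j * z ^ j * (z^(k-j) * (q^N)^(k-j))
          = qPoch q (q^N) j / qPoch q q j * (q^N)^(k-j) * (z^j * z^(k-j)) from by ring, hzz]
      rw [Finset.sum_congr rfl step, ← Finset.sum_mul, finC hq N k]
lemma tsum_nat_prod_eq_antidiag (F : ℕ × ℕ → ℂ) (hF : Summable F) :
    ∑' p : ℕ × ℕ, F p = ∑' k, ∑ kl ∈ Finset.HasAntidiagonal.antidiagonal k, F kl := by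
  conv_rhs => congr; ext; rw [← Finset.sum_finset_coe, ← tsum_fintype (L := SummationFilter.unconditional _)]
  rw [← Finset.HasAntidiagonal.sigmaAntidiagonalEquivProd.tsum_eq F]
  exact Summable.tsum_sigma' (fun k => (hasSum_fintype _).summable)
    (Finset.HasAntidiagonal.sigmaAntidiagonalEquivProd.summable_iff.mpr hF)


/-- H_n(aD_q) applied to 1/((bx;q)_∞ (cx;q)_∞). -/
theorem heine_op_inv_two_qPochInf (q a b c : ℂ) (hq0 : q ≠ 0) (hq : ‖q‖ < 1)
    (hab : ‖a * b‖ < 1) (hac : ‖a * c‖ < 1) (n : ℕ) (x : ℂ) (hx : x ≠ 0)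
    (hbx : ‖b * x‖ < 1) (hcx : ‖c * x‖ < 1) :
    ∑' k : ℕ, qPoch q (q ^ n) k / qPoch q q k * a ^ k *
        ((Dq q)^[k] (fun t => 1 / (qPochInf q (b * t) * qPochInf q (c * t))) x)
      = qPochInf q (q ^ n * a * c) /
          (qPochInf q (b * x) * qPochInf q (c * x) * qPochInf q (a * c)) *
        ∑' m : ℕ, qPoch q (q ^ n) m * qPoch q (c * x) m /
            (qPoch q q m * qPoch q (q ^ n * a * c) m) * (a * b) ^ m := by
  obtain ⟨δ, hδpos, hδle⟩ := qPoch_q_lower hq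
  set E := Real.exp ((1 - ‖q‖)⁻¹) with hE
  have hqn1 : ‖(q:ℂ)^n‖ ≤ 1 := by rw [norm_pow]; exact pow_le_one₀ (norm_nonneg q) hq.le
  set F : ℕ × ℕ → ℂ := fun p => qPoch q (q^n) (p.1+p.2) * qPoch q (c*x) p.1 /
      (qPoch q q p.1 * qPoch q q p.2) * ((a*b)^p.1 * (a*c)^p.2) with hFdef
  -- summability of F
  have hFs : Summable F := by
    refine Summable.of_norm_bounded (g := fun p : ℕ × ℕ => E * E / (δ*δ) * (‖a*b‖^p.1 * ‖a*c‖^p.2))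
      (Summable.mul_left _ (Summable.mul_of_nonneg
        (summable_geometric_of_lt_one (norm_nonneg _) hab)
        (summable_geometric_of_lt_one (norm_nonneg _) hac)
        (fun i => pow_nonneg (norm_nonneg _) _)
        (fun i => pow_nonneg (norm_nonneg _) _))) (fun p => ?_)
    rw [hFdef]
    simp only []
    simp only [norm_mul, norm_div, norm_pow]
    refine mul_le_mul_of_nonneg_right ?_ (by positivity)
    refine div_le_div₀ (mul_nonneg (Real.exp_nonneg _) (Real.exp_nonneg _))
      (mul_le_mul (qPoch_norm_le hq hqn1 _) (qPoch_norm_le hq hcx.le _)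
        (norm_nonneg _) (Real.exp_nonneg _))
      (mul_pos hδpos hδpos)
      (mul_le_mul (hδle _) (hδle _) hδpos.le (norm_nonneg _))
  -- Step 1: rewrite the iterated Dq and pull out the infinite product
  have step1 : ∑' k : ℕ, qPoch q (q ^ n) k / qPoch q q k * a ^ k *
        ((Dq q)^[k] (fun t => 1 / (qPochInf q (b * t) * qPochInf q (c * t))) x)
      = (∑' k : ℕ, qPoch q (q ^ n) k / qPoch q q k * a ^ k * hahn q (c*x) b c k) *
          (qPochInf q (b * x) * qPochInf q (c * x))⁻¹ := by
    rw [← tsum_mul_right]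
    apply tsum_congr
    intro k
    rw [Dq_iterate hq0 hq k x hx hbx hcx, div_eq_mul_inv]
    ring
  -- Step 2: expand hahn into the double family F
  have hG : ∀ k : ℕ, qPoch q (q ^ n) k / qPoch q q k * a ^ k * hahn q (c*x) b c k
      = ∑ kl ∈ Finset.HasAntidiagonal.antidiagonal k, F kl := by
    intro k
    rw [Finset.Nat.sum_antidiagonal_eq_sum_range_succ_mk, hahn, Finset.mul_sum]
    apply Finset.sum_congr rfl
    intro j hj
    have hjk : j ≤ k := by have := Finset.mem_range.mp hj; omega
    rw [hFdef]
    simp only []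
    rw [Nat.add_sub_cancel' hjk, qbinom]
    have ha : a^k = a^j * a^(k-j) := by rw [← pow_add, Nat.add_sub_cancel' hjk]
    rw [ha]
    have h1 : qPoch q q k ≠ 0 := qPoch_q_ne_zero hq k
    have h2 : qPoch q q j ≠ 0 := qPoch_q_ne_zero hq j
    have h3 : qPoch q q (k-j) ≠ 0 := qPoch_q_ne_zero hq (k-j)
    field_simp
    ring
  -- Step 3: Fubini
  have step3 : ∑' k : ℕ, qPoch q (q ^ n) k / qPoch q q k * a ^ k * hahn q (c*x) b c k
      = ∑' j : ℕ, ∑' m : ℕ, F (j, m) := by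
    rw [tsum_congr hG, ← tsum_nat_prod_eq_antidiag F hFs]
    exact Summable.tsum_prod' hFs fun j => hFs.prod_factor j
  -- Step 4: evaluate inner sums by the q-binomial theorem
  have step4 : ∀ j : ℕ, ∑' m : ℕ, F (j, m)
      = (qPoch q (q^n) j * qPoch q (c*x) j / qPoch q q j * (a*b)^j) *
          (1 / qPoch q (a*c) (n+j)) := by
    intro j
    have hterm : ∀ m : ℕ, F (j, m)
        = (qPoch q (q^n) j * qPoch q (c*x) j / qPoch q q j * (a*b)^j) *
            (qPoch q (q^(n+j)) m / qPoch q q m * (a*c)^m) := by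
      intro m
      rw [hFdef]
      simp only []
      rw [qPoch_add q (q^n) j m, show (q:ℂ)^n * q^j = q^(n+j) from (pow_add q n j).symm]
      ring
    rw [tsum_congr hterm, tsum_mul_left, sumB hq hac (n+j)]
  -- Step 5: split the finite Pochhammer
  have step5 : ∀ j : ℕ, (qPoch q (q^n) j * qPoch q (c*x) j / qPoch q q j * (a*b)^j) *
          (1 / qPoch q (a*c) (n+j))
      = (qPoch q (q^n) j * qPoch q (c*x) j / (qPoch q q j * qPoch q (q^n*a*c) j) * (a*b)^j) *
          (qPoch q (a*c) n)⁻¹ := by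
    intro j
    rw [qPoch_add q (a*c) n j, show a*c*q^n = q^n*a*c by ring]
    ring
  -- RHS simplification
  have hacn : ‖a*c*q^n‖ < 1 := by
    rw [show a*c*q^n = (a*c)*q^n by ring]
    exact norm_mul_pow_lt hq hac n
  have hQne : qPochInf q (a*c*q^n) ≠ 0 := qPochInf_ne_zero hq hacn
  have hRHS : qPochInf q (q ^ n * a * c) /
        (qPochInf q (b * x) * qPochInf q (c * x) * qPochInf q (a * c))
      = (qPoch q (a*c) n)⁻¹ * (qPochInf q (b * x) * qPochInf q (c * x))⁻¹ := by
    rw [show (q:ℂ)^n * a * c = a*c*q^n by ring, qPochInf_split hq hac n]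
    rw [show qPochInf q (b * x) * qPochInf q (c * x) *
        (qPoch q (a*c) n * qPochInf q (a*c*q^n))
      = qPochInf q (a*c*q^n) *
        (qPochInf q (b * x) * qPochInf q (c * x) * qPoch q (a*c) n) by ring]
    rw [div_mul_cancel_left₀ hQne, mul_inv, mul_inv]
    ring
  rw [step1, step3, tsum_congr step4, tsum_congr step5, tsum_mul_right, hRHS]
  ring
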